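/- Orthogonality of the optimal storing and forwarding strategies: for every deferral rate φ with 0 ≤ φ ≤ φ_crit and φ < 1, any feasible pair (s,r) that attains the maximum in the privacy–deferral function P(φ) satisfies s_k · r_k = 0 for every k ∈ {1,…,n}. -/

import Mathlib

/-!
STATEMENT 5. Orthogonality of the optimal storing and forwarding strategies:
for every deferral rate `φ` with `0 ≤ φ ≤ φ_crit` and `φ < 1`, any feasible pair
`(s,r)` attaining the maximum in the privacy–deferral function `P(φ)` satisfies
`sₖ · rₖ = 0` for every `k`.
-/

/-- Base-2 Shannon entropy `H(t) = -∑ tᵢ log₂ tᵢ` (with `0·log₂ 0 = 0`). -/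
noncomputable def shannon {n : ℕ} (t : Fin n → ℝ) : ℝ :=
  -∑ i, t i * Real.logb 2 (t i)

/-- A pair `(s,r)` is feasible for actual profile `q` and deferral rate `φ`. -/
def Feasible {n : ℕ} (q : Fin n → ℝ) (φ : ℝ) (s r : Fin n → ℝ) : Prop :=
  (∀ i, 0 ≤ s i) ∧ (∀ i, 0 ≤ r i) ∧ (∀ i, 0 ≤ q i - s i + r i) ∧
    (∑ i, s i = φ) ∧ (∑ i, r i = φ)

/-- Total variation distance `TV(p‖q) = ½ ∑ |pᵢ - qᵢ|`. -/
noncomputable def tvDist {n : ℕ} (p q : Fin n → ℝ) : ℝ :=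
  (1 / 2) * ∑ i, |p i - q i|

lemma max_sub_max_neg (a : ℝ) : max a 0 - max (-a) 0 = a := by
  rcases le_total a 0 with h | h
  · rw [max_eq_right h, max_eq_left (neg_nonneg.2 h)]; ring
  · rw [max_eq_left h, max_eq_right (neg_nonpos.2 h)]; ring

lemma negMulLog_le_aux {n : ℕ} (hn : 0 < n) {x : ℝ} (hx : 0 ≤ x) :
    Real.negMulLog x ≤ 1 / n - x + x * Real.log n := by
  rcases hx.eq_or_lt with h | h
  · rw [← h]
    simp [Real.negMulLog]
  · have hn' : (0:ℝ) < n := by exact_mod_cast hn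
    have hlog := Real.log_le_sub_one_of_pos (x := (x * n)⁻¹) (by positivity)
    rw [Real.log_inv, Real.log_mul (ne_of_gt h) (ne_of_gt hn')] at hlog
    have key : x * (x * n)⁻¹ = 1 / n := by field_simp
    have hmul := mul_le_mul_of_nonneg_left hlog (le_of_lt h)
    rw [Real.negMulLog]
    nlinarith [hmul, key]

lemma sum_const_one_div {n : ℕ} (hn : 0 < n) : ∑ _i : Fin n, (1 / (n:ℝ)) = 1 := by
  rw [Finset.sum_const, Finset.card_univ, Fintype.card_fin, nsmul_eq_mul, mul_one_div,
    div_self (by exact_mod_cast hn.ne')]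

lemma sum_negMulLog_le {n : ℕ} (hn : 0 < n) (t : Fin n → ℝ) (ht0 : ∀ i, 0 ≤ t i)
    (ht1 : ∑ i, t i = 1) : ∑ i, Real.negMulLog (t i) ≤ Real.log n := by
  have h := Finset.sum_le_sum (fun i (_ : i ∈ Finset.univ) => negMulLog_le_aux hn (ht0 i))
  calc ∑ i, Real.negMulLog (t i) ≤ ∑ i, (1 / (n:ℝ) - t i + t i * Real.log n) := h
    _ = Real.log n := by
        rw [Finset.sum_add_distrib, Finset.sum_sub_distrib, ← Finset.sum_mul, ht1,
          sum_const_one_div hn]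
        ring

lemma sum_max_eq {n : ℕ} (f : Fin n → ℝ) (h : ∑ i, f i = 0) :
    ∑ i, max (f i) 0 = (1 / 2) * ∑ i, |f i| := by
  have h1 : ∀ i ∈ Finset.univ, max (f i) 0 = (f i + |f i|) / 2 := by
    intro i _
    rcases le_total (f i) 0 with h' | h'
    · rw [max_eq_right h', abs_of_nonpos h']; ring
    · rw [max_eq_left h', abs_of_nonneg h']; ring
  rw [Finset.sum_congr rfl h1]
  have h2 : ∑ i, (f i + |f i|) / 2 = (∑ i, f i + ∑ i, |f i|) / 2 := by
    rw [← Finset.sum_add_distrib, Finset.sum_div]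
  rw [h2, h]; ring

lemma shannon_eq {n : ℕ} (v : Fin n → ℝ) :
    shannon v = (∑ i, Real.negMulLog (v i)) / Real.log 2 := by
  rw [shannon, Finset.sum_div, ← Finset.sum_neg_distrib]
  refine Finset.sum_congr rfl fun i _ => ?_
  rw [Real.negMulLog, Real.logb]
  ring

set_option maxHeartbeats 1000000 in
theorem optimal_strategies_orthogonal {n : ℕ} (hn : 2 ≤ n)
    (q : Fin n → ℝ) (hq0 : ∀ i, 0 ≤ q i) (hq1 : ∑ i, q i = 1)
    (φ : ℝ) (hφ0 : 0 ≤ φ) (hφcrit : φ ≤ tvDist (fun _ => 1 / (n : ℝ)) q)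
    (hφ1 : φ < 1) (s r : Fin n → ℝ) (hfeas : Feasible q φ s r)
    (hopt : ∀ s' r', Feasible q φ s' r' →
      shannon (fun i => q i - s' i + r' i) ≤ shannon (fun i => q i - s i + r i)) :
    ∀ k, s k * r k = 0 := by
  obtain ⟨hs0, hr0, hqsr, hsums, hsumr⟩ := hfeas
  intro k
  by_contra hk
  obtain ⟨hsk, hrk⟩ := mul_ne_zero_iff.mp hk
  have hsk' : 0 < s k := (hs0 k).lt_of_ne (Ne.symm hsk)
  have hrk' : 0 < r k := (hr0 k).lt_of_ne (Ne.symm hrk)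
  set ε : ℝ := min (s k) (r k) with hεdef
  have hε : 0 < ε := lt_min hsk' hrk'
  have hεs : ε ≤ s k := min_le_left _ _
  have hεr : ε ≤ r k := min_le_right _ _
  have hn0 : 0 < n := lt_of_lt_of_le (by norm_num) hn
  have hn' : (0:ℝ) < n := by exact_mod_cast hn0
  set t : Fin n → ℝ := fun i => q i - s i + r i with htdef
  have ht0 : ∀ i, 0 ≤ t i := hqsr
  have ht1 : ∑ i, t i = 1 := by
    have h1 : ∑ i, (q i - s i + r i) = ∑ i, q i - ∑ i, s i + ∑ i, r i := by
      rw [Finset.sum_add_distrib, Finset.sum_sub_distrib]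
    show ∑ i, (q i - s i + r i) = 1
    rw [h1, hq1, hsums, hsumr]; ring
  have hifsum : ∑ i, (if i = k then ε else 0) = ε := by simp
  -- positive and negative part sums of s - r are bounded by φ - ε
  have hpos : ∑ i, max (s i - r i) 0 ≤ φ - ε := by
    have hterm : ∀ i ∈ Finset.univ, max (s i - r i) 0 ≤ s i - (if i = k then ε else 0) := by
      intro i _
      by_cases hik : i = k
      · subst hik
        simp only [if_pos]
        exact max_le (by linarith) (by linarith)
      · simp only [if_neg hik]
        exact max_le (by linarith [hr0 i]) (by linarith [hs0 i])
    calc ∑ i, max (s i - r i) 0 ≤ ∑ i, (s i - (if i = k then ε else 0)) :=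
          Finset.sum_le_sum hterm
      _ = φ - ε := by rw [Finset.sum_sub_distrib, hsums, hifsum]
  -- facts about the critical rate
  set c : ℝ := tvDist (fun _ => 1 / (n:ℝ)) q with hcdef
  have hc1 : c ≤ 1 := by
    have h1 : ∀ i ∈ Finset.univ, |1 / (n:ℝ) - q i| ≤ 1 / (n:ℝ) + q i := by
      intro i _
      have h1n : (0:ℝ) ≤ 1 / n := by positivity
      exact abs_le.mpr ⟨by linarith [hq0 i], by linarith [hq0 i]⟩
    have h2 := Finset.sum_le_sum h1
    rw [Finset.sum_add_distrib, sum_const_one_div hn0, hq1] at h2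
    rw [hcdef, tvDist]
    linarith
  have hc2 : ∑ i, max (q i - 1 / (n:ℝ)) 0 = c := by
    have hsum0 : ∑ i, (q i - 1 / (n:ℝ)) = 0 := by
      rw [Finset.sum_sub_distrib, hq1, sum_const_one_div hn0]; ring
    rw [sum_max_eq _ hsum0, hcdef, tvDist]
    congr 1
    exact Finset.sum_congr rfl fun i _ => by rw [abs_sub_comm]
  -- the mixing weight
  set l : ℝ := ε / (1 + ε) with hldef
  have h1ε : (0:ℝ) < 1 + ε := by linarith
  have hl0 : 0 < l := div_pos hε h1ε
  have hl1 : l < 1 := (div_lt_one h1ε).mpr (by linarith)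
  have hleq : (1 - l) * ε = l := by
    rw [hldef]; field_simp; ring
  -- the improved apparent profile
  set t' : Fin n → ℝ := fun i => (1 - l) * t i + l * (1 / (n:ℝ)) with ht'def
  have ht'0 : ∀ i, 0 ≤ t' i := fun i =>
    add_nonneg (mul_nonneg (by linarith) (ht0 i)) (by positivity)
  have ht'1 : ∑ i, t' i = 1 := by
    show ∑ i, ((1 - l) * t i + l * (1 / (n:ℝ))) = 1
    rw [Finset.sum_add_distrib, ← Finset.mul_sum, ← Finset.mul_sum, ht1,
      sum_const_one_div hn0]
    ring
  set D' : ℝ := ∑ i, max (q i - t' i) 0 with hD'def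
  set E' : ℝ := ∑ i, max (t' i - q i) 0 with hE'def
  have hE'D' : E' = D' := by
    have hs1 : ∑ i, (t' i - q i) = 0 := by
      rw [Finset.sum_sub_distrib, ht'1, hq1]; ring
    have hs2 : ∑ i, (q i - t' i) = 0 := by
      rw [Finset.sum_sub_distrib, ht'1, hq1]; ring
    rw [hE'def, hD'def, sum_max_eq _ hs1, sum_max_eq _ hs2]
    congr 1
    exact Finset.sum_congr rfl fun i _ => by rw [abs_sub_comm]
  have hD'bound : D' ≤ φ := by
    have hterm : ∀ i ∈ Finset.univ,
        max (q i - t' i) 0 ≤ (1 - l) * max (s i - r i) 0 + l * max (q i - 1 / (n:ℝ)) 0 := by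
      intro i _
      have hdecomp : q i - t' i = (1 - l) * (s i - r i) + l * (q i - 1 / (n:ℝ)) := by
        simp only [ht'def, htdef]; ring
      refine max_le ?_ ?_
      · rw [hdecomp]
        have h1 := mul_le_mul_of_nonneg_left (le_max_left (s i - r i) 0) (by linarith : (0:ℝ) ≤ 1 - l)
        have h2 := mul_le_mul_of_nonneg_left (le_max_left (q i - 1 / (n:ℝ)) 0) hl0.le
        linarith
      · have h1 := mul_nonneg (by linarith : (0:ℝ) ≤ 1 - l) (le_max_right (s i - r i) 0)
        have h2 := mul_nonneg hl0.le (le_max_right (q i - 1 / (n:ℝ)) 0)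
        linarith
    have hsum := Finset.sum_le_sum hterm
    rw [Finset.sum_add_distrib, ← Finset.mul_sum, ← Finset.mul_sum, hc2] at hsum
    have h3 := mul_le_mul_of_nonneg_left hpos (by linarith : (0:ℝ) ≤ 1 - l)
    have h4 := mul_le_mul_of_nonneg_left hc1 hl0.le
    have h5 : (0:ℝ) ≤ l * φ := mul_nonneg hl0.le hφ0
    rw [hD'def]
    nlinarith [hsum]
  have hslack : 0 ≤ φ - D' := by linarith
  -- the improved feasible pair
  set s' : Fin n → ℝ := fun i => max (q i - t' i) 0 + (if i = k then φ - D' else 0) with hs'def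
  set r' : Fin n → ℝ := fun i => max (t' i - q i) 0 + (if i = k then φ - D' else 0) with hr'def
  have hteq : ∀ i, q i - s' i + r' i = t' i := by
    intro i
    have h1 := max_sub_max_neg (t' i - q i)
    rw [neg_sub] at h1
    simp only [hs'def, hr'def]
    by_cases h : i = k
    · linarith
    · linarith
  have hfeas' : Feasible q φ s' r' := by
    refine ⟨?_, ?_, ?_, ?_, ?_⟩
    · intro i
      refine add_nonneg (le_max_right _ _) ?_
      by_cases h : i = k <;> simp [h, hslack]
    · intro i
      refine add_nonneg (le_max_right _ _) ?_
      by_cases h : i = k <;> simp [h, hslack]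
    · intro i; rw [hteq i]; exact ht'0 i
    · show ∑ i, (max (q i - t' i) 0 + (if i = k then φ - D' else 0)) = φ
      rw [Finset.sum_add_distrib, ← hD'def]
      have : ∑ i, (if i = k then φ - D' else 0) = φ - D' := by simp
      rw [this]; ring
    · show ∑ i, (max (t' i - q i) 0 + (if i = k then φ - D' else 0)) = φ
      rw [Finset.sum_add_distrib, ← hE'def, hE'D']
      have : ∑ i, (if i = k then φ - D' else 0) = φ - D' := by simp
      rw [this]; ring
  -- t is not uniform
  have hne : ∃ i, t i ≠ 1 / (n:ℝ) := by
    by_contra hall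
    push_neg at hall
    have heq : ∀ i ∈ Finset.univ, max (q i - 1 / (n:ℝ)) 0 = max (s i - r i) 0 := by
      intro i _
      have : q i - 1 / (n:ℝ) = s i - r i := by
        rw [← hall i]; simp only [htdef]; ring
      rw [this]
    have h1 : ∑ i, max (q i - 1 / (n:ℝ)) 0 ≤ φ - ε := by
      rw [Finset.sum_congr rfl heq]; exact hpos
    rw [hc2] at h1
    have : φ ≤ c := hφcrit
    linarith
  obtain ⟨i₀, hi₀⟩ := hne
  -- strict entropy increase
  have h1n0 : (0:ℝ) ≤ 1 / n := by positivity
  have hSle : ∑ i, Real.negMulLog (t i) ≤ Real.log n := sum_negMulLog_le hn0 t ht0 ht1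
  have husum : ∑ _i : Fin n, Real.negMulLog (1 / (n:ℝ)) = Real.log n := by
    rw [Finset.sum_const, Finset.card_univ, Fintype.card_fin, nsmul_eq_mul,
      Real.negMulLog, one_div, Real.log_inv]
    field_simp
  have hterm : ∀ i ∈ Finset.univ,
      (1 - l) * Real.negMulLog (t i) + l * Real.negMulLog (1 / (n:ℝ)) ≤
        Real.negMulLog (t' i) := by
    intro i _
    have := Real.concaveOn_negMulLog.2 (Set.mem_Ici.mpr (ht0 i)) (Set.mem_Ici.mpr h1n0)
      (by linarith : (0:ℝ) ≤ 1 - l) hl0.le (by ring)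
    simpa only [smul_eq_mul, ht'def, one_div] using this
  have hterm0 : (1 - l) * Real.negMulLog (t i₀) + l * Real.negMulLog (1 / (n:ℝ)) <
      Real.negMulLog (t' i₀) := by
    have := Real.strictConcaveOn_negMulLog.2 (Set.mem_Ici.mpr (ht0 i₀)) (Set.mem_Ici.mpr h1n0)
      hi₀ (by linarith : (0:ℝ) < 1 - l) hl0 (by ring)
    simpa only [smul_eq_mul, ht'def, one_div] using this
  have hsumlt : ∑ i, ((1 - l) * Real.negMulLog (t i) + l * Real.negMulLog (1 / (n:ℝ))) <
      ∑ i, Real.negMulLog (t' i) :=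
    Finset.sum_lt_sum hterm ⟨i₀, Finset.mem_univ _, hterm0⟩
  have hcomb : ∑ i, ((1 - l) * Real.negMulLog (t i) + l * Real.negMulLog (1 / (n:ℝ))) =
      (1 - l) * ∑ i, Real.negMulLog (t i) + l * Real.log n := by
    rw [Finset.sum_add_distrib, ← Finset.mul_sum, ← Finset.mul_sum, husum]
  have hSlt : ∑ i, Real.negMulLog (t i) < ∑ i, Real.negMulLog (t' i) := by
    have h6 := mul_le_mul_of_nonneg_left hSle hl0.le
    nlinarith [hsumlt, hcomb]
  -- contradiction with optimality
  have hopt' := hopt s' r' hfeas'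
  have hfun : (fun i => q i - s' i + r' i) = t' := funext hteq
  rw [hfun] at hopt'
  have hlog2 : 0 < Real.log 2 := Real.log_pos (by norm_num)
  have hshan : shannon t < shannon t' := by
    rw [shannon_eq, shannon_eq]
    exact div_lt_div_of_pos_right hSlt hlog2
  have : shannon t' ≤ shannon t := hopt'
  linarith
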